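/- (Baker–Davenport reduction, Dujella–Pethő.) Let τ be an irrational real number, M a positive integer, and p/q a convergent of the continued fraction of τ with q > 6M. Let A, B, μ be real numbers with A > 0 and B > 1, and set ε₁ := ‖μ·q‖ − M·‖τ·q‖, where ‖x‖ denotes the distance from x to the nearest integer. If ε₁ > 0, then there is no solution of the inequality |m·τ − n + μ| < A·B^{−k} in positive integers m, n, k with m ≤ M and k ≥ log(A·q/ε₁)/log B. -/

import Mathlib

/-- Baker–Davenport reduction (Dujella–Pethő). Let `τ` be irrational with continued
fraction partial quotients `a t` and convergents `P t / Q t`, let `p/q` be a convergent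
with `q > 6M`, let `A > 0`, `B > 1`, `μ` be reals, and set
`ε₁ := ‖μ·q‖ - M·‖τ·q‖` (distance to the nearest integer). If `ε₁ > 0`, then there is no
solution of `|m·τ - n + μ| < A·B^(-k)` in positive integers `m, n, k` with `m ≤ M` and
`k ≥ log(A·q/ε₁)/log B`. -/
theorem stmt_6 (τ : ℝ) (hτ : Irrational τ)
    (M : ℕ) (hM : 0 < M)
    (a : ℕ → ℤ) (τs : ℕ → ℝ)
    (hτ0 : τs 0 = τ)
    (ha : ∀ t, a t = ⌊τs t⌋)
    (hτs : ∀ t, τs (t + 1) = 1 / (τs t - ⌊τs t⌋))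
    (P Q : ℕ → ℤ)
    (hP0 : P 0 = a 0) (hP1 : P 1 = a 1 * a 0 + 1)
    (hPr : ∀ t, P (t + 2) = a (t + 2) * P (t + 1) + P t)
    (hQ0 : Q 0 = 1) (hQ1 : Q 1 = a 1)
    (hQr : ∀ t, Q (t + 2) = a (t + 2) * Q (t + 1) + Q t)
    (p q : ℤ) (hconv : ∃ t, p = P t ∧ q = Q t)
    (hq6M : 6 * (M : ℤ) < q)
    (A B μ : ℝ) (hA : 0 < A) (hB : 1 < B)
    (ε₁ : ℝ)
    (hε₁def : ε₁ = |μ * (q : ℝ) - (round (μ * (q : ℝ)) : ℝ)| -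
        (M : ℝ) * |τ * (q : ℝ) - (round (τ * (q : ℝ)) : ℝ)|)
    (hε₁ : 0 < ε₁) :
    ¬ ∃ m n k : ℕ, 0 < m ∧ 0 < n ∧ 0 < k ∧ m ≤ M ∧
        Real.log (A * (q : ℝ) / ε₁) / Real.log B ≤ (k : ℝ) ∧
        |(m : ℝ) * τ - (n : ℝ) + μ| < A * B ^ (-(k : ℝ)) := by
  rintro ⟨m, n, k, hm, hn, hk, hmM, hklog, hineq⟩
  have hq0 : (0:ℤ) < q := lt_trans (by positivity) hq6M
  have hqR : (0:ℝ) < (q:ℝ) := by exact_mod_cast hq0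
  have hB0 : (0:ℝ) < B := lt_trans one_pos hB
  have hlogB : 0 < Real.log B := Real.log_pos hB
  have hpow : A * (q:ℝ) / ε₁ ≤ B ^ (k:ℝ) := by
    have h1 : Real.log (A * q / ε₁) ≤ (k:ℝ) * Real.log B := by
      rw [div_le_iff₀ hlogB] at hklog; linarith
    have h2 : Real.log (A * q / ε₁) ≤ Real.log (B ^ (k:ℝ)) := by
      rw [Real.log_rpow hB0]; exact h1
    exact (Real.log_le_log_iff (by positivity) (Real.rpow_pos_of_pos hB0 _)).mp h2
  have hBk : 0 < B ^ (k:ℝ) := Real.rpow_pos_of_pos hB0 _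
  have hkey : A * B ^ (-(k:ℝ)) * q ≤ ε₁ := by
    rw [Real.rpow_neg hB0.le]
    rw [div_le_iff₀ hε₁, mul_comm] at hpow
    calc A * (B ^ (k:ℝ))⁻¹ * q = A * q / B ^ (k:ℝ) := by ring
    _ ≤ ε₁ := by rw [div_le_iff₀ hBk]; linarith
  set r : ℤ := round (τ * (q:ℝ)) with hr
  set s : ℤ := round (μ * (q:ℝ)) with hs
  have hEq : μ * (q:ℝ) - (((n:ℤ) * q - (m:ℤ) * r : ℤ):ℝ) =
      ((m:ℝ) * τ - (n:ℝ) + μ) * q - (m:ℝ) * (τ * q - (r:ℝ)) := by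
    push_cast; ring
  have hδ : (0:ℝ) ≤ |τ * (q:ℝ) - (r:ℝ)| := abs_nonneg _
  have h3 : |μ * (q:ℝ) - (((n:ℤ) * q - (m:ℤ) * r : ℤ):ℝ)| ≤
      |((m:ℝ) * τ - (n:ℝ) + μ)| * q + (m:ℝ) * |τ * q - (r:ℝ)| := by
    rw [hEq]
    calc |((m:ℝ) * τ - (n:ℝ) + μ) * q - (m:ℝ) * (τ * q - (r:ℝ))|
        ≤ |((m:ℝ) * τ - (n:ℝ) + μ) * q| + |(m:ℝ) * (τ * q - (r:ℝ))| := abs_sub _ _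
      _ = |((m:ℝ) * τ - (n:ℝ) + μ)| * q + (m:ℝ) * |τ * q - (r:ℝ)| := by
          rw [abs_mul, abs_mul, abs_of_pos hqR, abs_of_nonneg (by positivity : (0:ℝ) ≤ (m:ℝ))]
  have h4 : |((m:ℝ) * τ - (n:ℝ) + μ)| * q < A * B ^ (-(k:ℝ)) * q :=
    mul_lt_mul_of_pos_right hineq hqR
  have h5 : (m:ℝ) * |τ * q - (r:ℝ)| ≤ (M:ℝ) * |τ * q - (r:ℝ)| := by
    apply mul_le_mul_of_nonneg_right _ hδ
    exact_mod_cast hmM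
  have h6 : |μ * (q:ℝ) - (s:ℝ)| ≤ |μ * (q:ℝ) - (((n:ℤ) * q - (m:ℤ) * r : ℤ):ℝ)| := round_le _ _
  linarith
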